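/- Let G be a connected finite simple graph on at least 2 vertices with symmetric edge weights θ_{ij} = θ_{ji} > 0 assigned to each adjacent pair, and let ρ : V(G) → ℝ be not identically zero. Define Q(α) = Σ_{{i,j} ∈ E(G)} (2ρ_i ρ_j − cos(αθ_{ij})(ρ_i² + ρ_j²))/sin(αθ_{ij}). Then Q is strictly increasing on any interval I ⊆ (0,∞) such that sin(αθ_{ij}) ≠ 0 for all α ∈ I and all edges {i,j}. -/

import Mathlib

open Finset

lemma num_nonneg' (a b c : ℝ) (h1 : -1 ≤ c) (h2 : c ≤ 1) :
    0 ≤ (a ^ 2 + b ^ 2) - 2 * a * b * c := by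
  nlinarith [sq_nonneg (a - b), sq_nonneg (a + b)]

lemma num_pos' (a b c : ℝ) (hc : c ^ 2 < 1) (ha : a ≠ 0) :
    0 < (a ^ 2 + b ^ 2) - 2 * a * b * c := by
  have h1 : -1 < c := by nlinarith
  have h2 : c < 1 := by nlinarith
  have key : 0 < (1 + c) * (a - b) ^ 2 + (1 - c) * (a + b) ^ 2 := by
    rcases eq_or_ne (a - b) 0 with h | h
    · have hab : a = b := by linarith [sub_eq_zero.mp h]
      have h' : a + b ≠ 0 := by intro h'; exact ha (by linarith)
      have := mul_pos (by linarith : (0:ℝ) < 1 - c) (by positivity : 0 < (a + b) ^ 2)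
      nlinarith [mul_nonneg (by linarith : (0:ℝ) ≤ 1 + c) (sq_nonneg (a - b))]
    · have := mul_pos (by linarith : (0:ℝ) < 1 + c) (by positivity : 0 < (a - b) ^ 2)
      nlinarith [mul_nonneg (by linarith : (0:ℝ) ≤ 1 - c) (sq_nonneg (a + b))]
  nlinarith [key]

lemma term_deriv' (a b th : ℝ) (α : ℝ) (hs : Real.sin (α * th) ≠ 0) :
    HasDerivAt (fun α : ℝ => (2 * a * b - Real.cos (α * th) * (a ^ 2 + b ^ 2)) / Real.sin (α * th))
      (th * ((a ^ 2 + b ^ 2) - 2 * a * b * Real.cos (α * th)) / Real.sin (α * th) ^ 2) α := by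
  have hid : HasDerivAt (fun α : ℝ => α * th) th α := by
    simpa using (hasDerivAt_id α).mul_const th
  have hc : HasDerivAt (fun α : ℝ => Real.cos (α * th)) (-Real.sin (α * th) * th) α :=
    hid.cos
  have hsin : HasDerivAt (fun α : ℝ => Real.sin (α * th)) (Real.cos (α * th) * th) α :=
    hid.sin
  have hnum : HasDerivAt (fun α : ℝ => 2 * a * b - Real.cos (α * th) * (a ^ 2 + b ^ 2))
      (-((-Real.sin (α * th) * th) * (a ^ 2 + b ^ 2))) α := by
    exact (hc.mul_const (a ^ 2 + b ^ 2)).const_sub (2 * a * b)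
  have h := hnum.div hsin hs
  refine h.congr_deriv (Eq.symm ?_)
  have hpy := Real.sin_sq_add_cos_sq (α * th)
  rw [div_left_inj' (pow_ne_zero 2 hs)]
  linear_combination (-th * (a ^ 2 + b ^ 2)) * hpy

theorem stmt_5 (n : ℕ) (hn : 2 ≤ n) (G : SimpleGraph (Fin n)) [DecidableRel G.Adj]
    (hconn : G.Connected)
    (θ : Fin n → Fin n → ℝ) (hsym : ∀ i j, θ i j = θ j i)
    (hpos : ∀ i j, G.Adj i j → 0 < θ i j)
    (ρ : Fin n → ℝ) (hρ : ρ ≠ 0)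
    (I : Set ℝ) (hI : I.OrdConnected) (hIpos : I ⊆ Set.Ioi (0 : ℝ))
    (hns : ∀ α ∈ I, ∀ i j, G.Adj i j → Real.sin (α * θ i j) ≠ 0) :
    StrictMonoOn (fun α : ℝ =>
      (1 / 2 : ℝ) * ∑ i, ∑ j ∈ G.neighborFinset i,
        (2 * ρ i * ρ j - Real.cos (α * θ i j) * (ρ i ^ 2 + ρ j ^ 2))
          / Real.sin (α * θ i j)) I := by
  set D : ℝ → ℝ := fun α => (1 / 2 : ℝ) * ∑ i, ∑ j ∈ G.neighborFinset i,
      θ i j * ((ρ i ^ 2 + ρ j ^ 2) - 2 * ρ i * ρ j * Real.cos (α * θ i j))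
        / Real.sin (α * θ i j) ^ 2 with hD
  have hf : ∀ α ∈ I, HasDerivAt (fun α : ℝ =>
      (1 / 2 : ℝ) * ∑ i, ∑ j ∈ G.neighborFinset i,
        (2 * ρ i * ρ j - Real.cos (α * θ i j) * (ρ i ^ 2 + ρ j ^ 2))
          / Real.sin (α * θ i j)) (D α) α := by
    intro α hα
    apply HasDerivAt.const_mul
    apply HasDerivAt.fun_sum
    intro i _
    apply HasDerivAt.fun_sum
    intro j hj
    exact term_deriv' (ρ i) (ρ j) (θ i j) α
      (hns α hα i j ((SimpleGraph.mem_neighborFinset G i j).mp hj))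
  apply strictMonoOn_of_deriv_pos hI.convex
  · intro α hα
    exact ((hf α hα).continuousAt).continuousWithinAt
  · intro x hx
    have hxI : x ∈ I := interior_subset hx
    rw [(hf x hxI).deriv]
    apply mul_pos (by norm_num : (0:ℝ) < 1/2)
    have hnonneg : ∀ i : Fin n, 0 ≤ ∑ j ∈ G.neighborFinset i,
        θ i j * ((ρ i ^ 2 + ρ j ^ 2) - 2 * ρ i * ρ j * Real.cos (x * θ i j))
          / Real.sin (x * θ i j) ^ 2 := by
      intro i
      apply Finset.sum_nonneg
      intro j hj
      have hadj := (SimpleGraph.mem_neighborFinset G i j).mp hj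
      apply div_nonneg
      · exact mul_nonneg (hpos i j hadj).le
          (num_nonneg' _ _ _ (Real.neg_one_le_cos _) (Real.cos_le_one _))
      · positivity
    have hv : ∃ v : Fin n, ρ v ≠ 0 := Function.ne_iff.mp hρ
    obtain ⟨v, hv⟩ := hv
    obtain ⟨u, hu⟩ := Fintype.exists_ne_of_one_lt_card (by simp; omega) v
    obtain ⟨p⟩ := hconn.preconnected v u
    have hw : ∃ w, G.Adj v w := by
      cases p with
      | nil => exact absurd rfl hu
      | cons h q => exact ⟨_, h⟩
    obtain ⟨w, hvw⟩ := hw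
    apply Finset.sum_pos' (fun i _ => hnonneg i)
    refine ⟨v, Finset.mem_univ v, ?_⟩
    apply Finset.sum_pos'
    · intro j hj
      have hadj := (SimpleGraph.mem_neighborFinset G v j).mp hj
      apply div_nonneg
      · exact mul_nonneg (hpos v j hadj).le
          (num_nonneg' _ _ _ (Real.neg_one_le_cos _) (Real.cos_le_one _))
      · positivity
    · refine ⟨w, (SimpleGraph.mem_neighborFinset G v w).mpr hvw, ?_⟩
      have hs := hns x hxI v w hvw
      have hs2 : 0 < Real.sin (x * θ v w) ^ 2 := pow_two_pos_of_ne_zero hs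
      have hc2 : Real.cos (x * θ v w) ^ 2 < 1 := by
        have := Real.sin_sq_add_cos_sq (x * θ v w)
        linarith
      exact div_pos (mul_pos (hpos v w hvw) (num_pos' _ _ _ hc2 hv)) hs2
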